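/- Distance-based reachability in a strongly connected graph under a reachability semiring: model routes as S = Option ℕ (hop count), with init d = some 0 at a designated destination d and none elsewhere, transfer on every edge mapping some n to some (n+1) and none to none, and merge taking the minimum (none is identity). Then for every node v, σ v t = some (dist(d,v)) for all t ≥ dist(d,v), where dist(d,v) is the length of the shortest directed path from d to v; in particular the interface A v = Finally_{dist(d,v)} Globally({s : s ≠ none}) satisfies the initial and inductive conditions. -/

import Mathlib

/-- A network instance: in-neighbors, initial routes, edge transfer functions
and a merge (selection) function. -/
structure Network (V : Type) (S : Type) where
  pred : V → List V
  init : V → S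
  T : V → V → S → S
  merge : S → S → S

/-- The route computed at `v` from neighbor states `s`:
`init v` merged with the transferred routes of the in-neighbors. -/
def mergedState {V S : Type} (N : Network V S) (v : V) (s : V → S) : S :=
  (N.pred v).foldr (fun u acc => N.merge (N.T u v (s u)) acc) (N.init v)

/-- The synchronous simulation state. -/
def sim {V S : Type} (N : Network V S) : ℕ → V → S
  | 0, v => N.init v
  | t + 1, v => mergedState N v (sim N t)

/-- Initial verification condition. -/
def InitCond {V S : Type} (N : Network V S) (A : V → ℕ → Set S) : Prop :=
  ∀ v, N.init v ∈ A v 0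

/-- Inductive verification condition. -/
def IndCond {V S : Type} (N : Network V S) (A : V → ℕ → Set S) : Prop :=
  ∀ v (t : ℕ) (s : V → S), (∀ u ∈ N.pred v, s u ∈ A u t) →
    mergedState N v s ∈ A v (t + 1)

/-- The `globally` temporal operator. -/
def Globally {S : Type} (φ : Set S) : ℕ → Set S := fun _ => φ

/-- The `until` temporal operator with witness time `τ`. -/
def UntilOp {S : Type} (τ : ℕ) (φ : Set S) (Q : ℕ → Set S) : ℕ → Set S :=
  fun t => if t < τ then φ else Q t

/-- The `finally` temporal operator with witness time `τ`. -/
def FinallyOp {S : Type} (τ : ℕ) (Q : ℕ → Set S) : ℕ → Set S :=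
  UntilOp τ Set.univ Q

/-- Min-merge on hop counts: none is identity, minimum otherwise. -/
def omin : Option ℕ → Option ℕ → Option ℕ
  | none, b => b
  | some a, none => some a
  | some a, some b => some (min a b)

/-- The hop-count (reachability semiring) network with destination d. -/
def distNet {V : Type} [DecidableEq V] (pred : V → List V) (d : V) :
    Network V (Option ℕ) :=
  ⟨pred, fun v => if v = d then some 0 else none,
    fun _ _ r => r.map (· + 1), omin⟩


lemma foldr_eq_some {V : Type} (f : V → Option ℕ) :
    ∀ (l : List V) (a : Option ℕ) (m : ℕ),
    l.foldr (fun u acc => omin (f u) acc) a = some m →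
    (∃ u ∈ l, f u = some m) ∨ a = some m := by
  intro l
  induction l with
  | nil => intro a m h; exact Or.inr h
  | cons x l ih =>
    intro a m h
    simp only [List.foldr_cons] at h
    cases hf : f x with
    | none =>
      rw [hf] at h
      simp only [omin] at h
      rcases ih a m h with ⟨u, hu, h⟩ | h
      · exact Or.inl ⟨u, List.mem_cons_of_mem _ hu, h⟩
      · exact Or.inr h
    | some b =>
      rw [hf] at h
      cases hr : l.foldr (fun u acc => omin (f u) acc) a with
      | none =>
        rw [hr] at h; simp only [omin, Option.some.injEq] at h
        exact Or.inl ⟨x, List.mem_cons_self, by rw [hf, h]⟩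
      | some c =>
        rw [hr] at h; simp only [omin, Option.some.injEq] at h
        rcases min_choice b c with hm | hm
        · exact Or.inl ⟨x, List.mem_cons_self, by rw [hf, ← h, hm]⟩
        · rcases ih a m (by rw [hr, ← h, hm]) with ⟨u, hu, h'⟩ | h'
          · exact Or.inl ⟨u, List.mem_cons_of_mem _ hu, h'⟩
          · exact Or.inr h'

lemma foldr_le_acc {V : Type} (f : V → Option ℕ) :
    ∀ (l : List V) (n : ℕ),
    ∃ m ≤ n, l.foldr (fun u acc => omin (f u) acc) (some n) = some m := by
  intro l n
  induction l with
  | nil => exact ⟨n, le_rfl, rfl⟩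
  | cons x l ih =>
    obtain ⟨m, hm, hr⟩ := ih
    simp only [List.foldr_cons, hr]
    cases hf : f x with
    | none => exact ⟨m, hm, rfl⟩
    | some b => exact ⟨min b m, le_trans (min_le_right _ _) hm, rfl⟩

lemma foldr_le_mem {V : Type} (f : V → Option ℕ) :
    ∀ (l : List V) (u : V) (n : ℕ) (a : Option ℕ), u ∈ l → f u = some n →
    ∃ m ≤ n, l.foldr (fun u acc => omin (f u) acc) a = some m := by
  intro l
  induction l with
  | nil => intro u n a h; exact absurd h List.not_mem_nil
  | cons x l ih =>
    intro u n a hu hf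
    simp only [List.foldr_cons]
    rcases List.mem_cons.mp hu with rfl | hu
    · rw [hf]
      cases hr : l.foldr (fun u acc => omin (f u) acc) a with
      | none => exact ⟨n, le_rfl, rfl⟩
      | some c => exact ⟨min n c, min_le_left _ _, rfl⟩
    · obtain ⟨m, hm, hr⟩ := ih u n a hu hf
      rw [hr]
      cases hf' : f x with
      | none => exact ⟨m, hm, rfl⟩
      | some b => exact ⟨min b m, le_trans (min_le_right _ _) hm, rfl⟩

lemma mergedState_distNet {V : Type} [DecidableEq V] (pred : V → List V) (d : V)
    (v : V) (s : V → Option ℕ) :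
    mergedState (distNet pred d) v s =
      (pred v).foldr (fun u acc => omin ((fun w => (s w).map (· + 1)) u) acc)
        (if v = d then some 0 else none) := rfl

/-- Distance-based reachability: every node v stabilizes to some (dist v)
from time dist v onward, and the Finally/Globally distance interface is valid. -/
theorem dist_reachability {V : Type} [DecidableEq V]
    (pred : V → List V) (d : V) (dist : V → ℕ)
    (hpath : ∀ v, ∃ p : ℕ → V, p 0 = d ∧ p (dist v) = v ∧
      ∀ i < dist v, p i ∈ pred (p (i + 1)))
    (hmin : ∀ v (k : ℕ) (p : ℕ → V), p 0 = d → p k = v →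
      (∀ i < k, p i ∈ pred (p (i + 1))) → dist v ≤ k) :
    (∀ v (t : ℕ), dist v ≤ t → sim (distNet pred d) t v = some (dist v)) ∧
    InitCond (distNet pred d)
      (fun v => FinallyOp (dist v) (Globally {s | s ≠ none})) ∧
    IndCond (distNet pred d)
      (fun v => FinallyOp (dist v) (Globally {s | s ≠ none})) := by

  -- basic facts
  have hdd : dist d = 0 :=
    Nat.le_zero.mp (hmin d 0 (fun _ => d) rfl rfl (by omega))
  have hstep : ∀ u v, u ∈ pred v → dist v ≤ dist u + 1 := by
    intro u v huv
    obtain ⟨p, hp0, hpu, hpe⟩ := hpath u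
    refine hmin v (dist u + 1) (fun i => if i ≤ dist u then p i else v)
      (by simp [hp0]) (by simp) ?_
    intro i hi
    rcases Nat.lt_or_ge i (dist u) with h | h
    · simpa only [if_pos (le_of_lt h), if_pos (Nat.succ_le_of_lt h)] using hpe i h
    · have hieq : i = dist u := by omega
      subst hieq
      show (if dist u ≤ dist u then p (dist u) else v) ∈
        pred (if dist u + 1 ≤ dist u then p (dist u + 1) else v)
      rw [if_pos le_rfl, if_neg (by omega), hpu]
      exact huv
  -- lower bound
  have lb : ∀ t v m, sim (distNet pred d) t v = some m → dist v ≤ m := by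
    intro t
    induction t with
    | zero =>
      intro v m h
      simp only [sim, distNet] at h
      by_cases hv : v = d
      · subst hv
        rw [if_pos rfl] at h
        rw [hdd]; omega
      · rw [if_neg hv] at h; exact absurd h (by simp)
    | succ t ih =>
      intro v m h
      rw [sim, mergedState_distNet] at h
      rcases foldr_eq_some _ _ _ _ h with ⟨u, hu, hfu⟩ | hinit
      · cases hs : sim (distNet pred d) t u with
        | none => rw [hs] at hfu; exact absurd hfu (by simp)
        | some a =>
          rw [hs] at hfu
          simp only [Option.map_some, Option.some.injEq] at hfu
          have h1 := ih u a hs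
          have h2 := hstep u v hu
          omega
      · by_cases hv : v = d
        · subst hv; rw [hdd]; omega
        · rw [if_neg hv] at hinit; exact absurd hinit (by simp)
  -- upper bound along a path
  have key : ∀ (v : V) (p : ℕ → V), p 0 = d →
      (∀ i < dist v, p i ∈ pred (p (i + 1))) →
      ∀ t i, i ≤ t → i ≤ dist v → ∃ m ≤ i, sim (distNet pred d) t (p i) = some m := by
    intro v p hp0 hpe t
    induction t with
    | zero =>
      intro i hit _
      have : i = 0 := Nat.le_zero.mp hit
      subst this
      refine ⟨0, le_rfl, ?_⟩
      simp [sim, distNet, hp0]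
    | succ t ih =>
      intro i hit hiv
      cases i with
      | zero =>
        rw [sim, mergedState_distNet, hp0, if_pos rfl]
        exact foldr_le_acc _ _ _
      | succ i =>
        obtain ⟨m, hm, hs⟩ := ih i (by omega) (by omega)
        rw [sim, mergedState_distNet]
        obtain ⟨m', hm', hr⟩ := foldr_le_mem
          (fun w => (sim (distNet pred d) t w).map (· + 1))
          (pred (p (i + 1))) (p i) (m + 1) _
          (hpe i (by omega)) (by simp [hs])
        exact ⟨m', by omega, hr⟩
  have main : ∀ v (t : ℕ), dist v ≤ t → sim (distNet pred d) t v = some (dist v) := by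
    intro v t ht
    obtain ⟨p, hp0, hpv, hpe⟩ := hpath v
    obtain ⟨m, hm, hs⟩ := key v p hp0 hpe t (dist v) ht le_rfl
    rw [hpv] at hs
    have := lb t v m hs
    have : m = dist v := by omega
    rw [hs, this]
  refine ⟨main, ?_, ?_⟩
  · -- InitCond
    intro v
    simp only [FinallyOp, UntilOp, Globally]
    by_cases hv : 0 < dist v
    · rw [if_pos hv]; trivial
    · rw [if_neg hv]
      have h0 : dist v = 0 := by omega
      have := main v 0 (by omega)
      simp only [sim] at this
      simp only [Set.mem_setOf_eq, this]
      exact Option.some_ne_none _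
  · -- IndCond
    intro v t s hA
    simp only [FinallyOp, UntilOp, Globally]
    by_cases hv : t + 1 < dist v
    · rw [if_pos hv]; trivial
    · rw [if_neg hv]
      simp only [Set.mem_setOf_eq]
      rw [mergedState_distNet]
      cases hdv : dist v with
      | zero =>
        obtain ⟨p, hp0, hpv, _⟩ := hpath v
        rw [hdv] at hpv
        have hvd : v = d := by rw [← hpv, hp0]
        rw [if_pos hvd]
        obtain ⟨m, _, hr⟩ := foldr_le_acc
          (fun w => (s w).map (· + 1)) (pred v) 0
        rw [hr]; exact Option.some_ne_none _
      | succ k =>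
        obtain ⟨p, hp0, hpv, hpe⟩ := hpath v
        rw [hdv] at hpv hpe
        have hedge : p k ∈ pred v := by
          rw [← hpv]; exact hpe k (by omega)
        have hdu : dist (p k) ≤ k :=
          hmin (p k) k p hp0 rfl (fun i hi => hpe i (by omega))
        have hAu := hA (p k) hedge
        simp only [FinallyOp, UntilOp, Globally, distNet] at hAu
        rw [if_neg (by omega)] at hAu
        simp only [Set.mem_setOf_eq] at hAu
        cases hsu : s (p k) with
        | none => exact absurd hsu hAu
        | some a =>
          obtain ⟨m, _, hr⟩ := foldr_le_mem
            (fun w => (s w).map (· + 1)) (pred v) (p k) (a + 1) _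
            hedge (by simp [hsu])
          rw [hr]; exact Option.some_ne_none _
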